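/- Let n ≥ 4, let 𝒞 be a maximal independent set of C_n with c = |𝒞| and ℓ = n − 2c, and let G be the 𝒞-suspension of C_n. Then P_G(x) = P_{C_n}(x) + x(1+x)^{c−ℓ}(1+2x)^{ℓ}. -/

import Mathlib

open scoped Classical

/-- A finset of vertices is independent: no two of its members are adjacent. -/
def IsIndepFinset {V : Type*} (G : SimpleGraph V) (s : Finset V) : Prop :=
  ∀ a ∈ s, ∀ b ∈ s, ¬ G.Adj a b

/-- The independence polynomial of `G`, evaluated at `x : ℤ`:
`P_G(x) = Σ_i g_i x^i` where `g_i` is the number of independent sets of size `i`. -/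
noncomputable def indepPolynomial {V : Type*} [Fintype V] (G : SimpleGraph V) (x : ℤ) : ℤ :=
  ∑ s ∈ Finset.univ.filter (fun s : Finset V => IsIndepFinset G s), x ^ s.card

/-- The independence number of `G`. -/
noncomputable def indepNumber {V : Type*} [Fintype V] (G : SimpleGraph V) : ℕ :=
  (Finset.univ.filter (fun s : Finset V => IsIndepFinset G s)).sup Finset.card

/-- The `C`-suspension of `G`: adjoin a new vertex (`none`) adjacent exactly to `C`. -/
def susp {V : Type*} (G : SimpleGraph V) (C : Set V) : SimpleGraph (Option V) where
  Adj a b :=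
    match a, b with
    | some a, some b => G.Adj a b
    | some a, none => a ∈ C
    | none, some b => b ∈ C
    | none, none => False
  symm := by
    constructor
    rintro (_ | a) (_ | b) h
    · exact h
    · exact h
    · exact h
    · exact h.symm
  loopless := by
    constructor
    rintro (_ | a) h
    · exact h
    · exact G.irrefl h

noncomputable def ip {V : Type*} [DecidableEq V] (G : SimpleGraph V) (K : Finset V) (x : ℤ) : ℤ :=
  ∑ s ∈ K.powerset.filter (fun s => IsIndepFinset G s), x ^ s.card

lemma indep_subset {V : Type*} {G : SimpleGraph V} {s t : Finset V}
    (h : IsIndepFinset G s) (hts : t ⊆ s) : IsIndepFinset G t :=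
  fun a ha b hb => h a (hts ha) b (hts hb)

lemma ip_empty {V : Type*} [DecidableEq V] (G : SimpleGraph V) (x : ℤ) : ip G ∅ x = 1 := by
  rw [ip]
  rw [Finset.powerset_empty]
  rw [Finset.filter_singleton]
  simp [IsIndepFinset]

lemma ip_singleton {V : Type*} [DecidableEq V] (G : SimpleGraph V) (v : V) (x : ℤ) :
    ip G {v} x = 1 + x := by
  rw [ip]
  have hps : ({v} : Finset V).powerset = {∅, {v}} := by
    ext s; simp [Finset.subset_singleton_iff]
  rw [hps]
  have h1 : ∀ s ∈ ({∅, {v}} : Finset (Finset V)), IsIndepFinset G s := by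
    intro s hs
    simp only [Finset.mem_insert, Finset.mem_singleton] at hs
    rcases hs with rfl | rfl
    · intro a ha; simp at ha
    · intro a ha b hb
      simp only [Finset.mem_singleton] at ha hb
      subst ha; subst hb; exact G.loopless.irrefl _
  rw [Finset.filter_true_of_mem h1]
  rw [Finset.sum_insert (by simp [(Finset.singleton_ne_empty v).symm])]
  simp

lemma ip_pair {V : Type*} [DecidableEq V] (G : SimpleGraph V) (v w : V) (hvw : v ≠ w)
    (hadj : G.Adj v w) (x : ℤ) : ip G {v, w} x = 1 + 2 * x := by
  rw [ip]
  have hset : ({v, w} : Finset V).powerset.filter (fun s => IsIndepFinset G s)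
      = {∅, {v}, {w}} := by
    ext s
    simp only [Finset.mem_filter, Finset.mem_powerset, Finset.mem_insert, Finset.mem_singleton]
    constructor
    · rintro ⟨hsub, hind⟩
      by_cases hv : v ∈ s
      · by_cases hw : w ∈ s
        · exact absurd hadj (hind v hv w hw)
        · right; left
          apply Finset.Subset.antisymm
          · intro a ha
            rcases Finset.mem_insert.mp (hsub ha) with h | h
            · simpa [h]
            · simp only [Finset.mem_singleton] at h; subst h; exact absurd ha hw
          · simpa using hv
      · by_cases hw : w ∈ s
        · right; right
          apply Finset.Subset.antisymm
          · intro a ha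
            rcases Finset.mem_insert.mp (hsub ha) with h | h
            · subst h; exact absurd ha hv
            · simpa using h
          · simpa using hw
        · left
          ext a
          simp only [Finset.notMem_empty, iff_false]
          intro ha
          rcases Finset.mem_insert.mp (hsub ha) with h | h
          · subst h; exact hv ha
          · simp only [Finset.mem_singleton] at h; subst h; exact hw ha
    · rintro (rfl | rfl | rfl)
      · exact ⟨Finset.empty_subset _, fun a ha => by simp at ha⟩
      · refine ⟨by simp, fun a ha b hb => ?_⟩
        simp only [Finset.mem_singleton] at ha hb; subst ha; subst hb; exact G.loopless.irrefl _
      · refine ⟨by intro a ha; simp only [Finset.mem_singleton] at ha; simp [ha], 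
          fun a ha b hb => ?_⟩
        simp only [Finset.mem_singleton] at ha hb; subst ha; subst hb; exact G.loopless.irrefl _
  rw [hset]
  rw [Finset.sum_insert (by simp [(Finset.singleton_ne_empty v).symm, (Finset.singleton_ne_empty w).symm, Finset.insert_ne_empty]), Finset.sum_insert (by simp [Finset.singleton_inj, hvw])]
  simp only [Finset.sum_singleton, Finset.card_empty, Finset.card_singleton, pow_zero, pow_one]
  ring

lemma ip_split {V : Type*} [DecidableEq V] (G : SimpleGraph V) (K A : Finset V) (x : ℤ)
    (hA : A ⊆ K) (hcross : ∀ a ∈ A, ∀ b ∈ K \ A, ¬ G.Adj a b) :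
    ip G K x = ip G A x * ip G (K \ A) x := by
  rw [ip, ip, ip, Finset.sum_mul_sum, ← Finset.sum_product']
  refine Finset.sum_nbij' (fun s => (s ∩ A, s \ A)) (fun p => p.1 ∪ p.2) ?_ ?_ ?_ ?_ ?_
  · intro s hs
    simp only [Finset.mem_filter, Finset.mem_powerset] at hs
    simp only [Finset.mem_product, Finset.mem_filter, Finset.mem_powerset]
    exact ⟨⟨Finset.inter_subset_right, indep_subset hs.2 Finset.inter_subset_left⟩,
      ⟨fun a ha => Finset.mem_sdiff.mpr ⟨hs.1 (Finset.mem_sdiff.mp ha).1, (Finset.mem_sdiff.mp ha).2⟩,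
       indep_subset hs.2 (Finset.sdiff_subset)⟩⟩
  · intro p hp
    simp only [Finset.mem_product, Finset.mem_filter, Finset.mem_powerset] at hp
    simp only [Finset.mem_filter, Finset.mem_powerset]
    constructor
    · exact Finset.union_subset (hp.1.1.trans hA) (hp.2.1.trans (Finset.sdiff_subset))
    · intro a ha b hb
      rcases Finset.mem_union.mp ha with ha' | ha' <;> rcases Finset.mem_union.mp hb with hb' | hb'
      · exact hp.1.2 a ha' b hb'
      · exact hcross a (hp.1.1 ha') b (hp.2.1 hb')
      · exact fun h => hcross b (hp.1.1 hb') a (hp.2.1 ha') h.symm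
      · exact hp.2.2 a ha' b hb'
  · intro s hs
    simp only [Finset.mem_filter, Finset.mem_powerset] at hs
    show s ∩ A ∪ s \ A = s
    rw [Finset.union_comm, Finset.sdiff_union_inter]
  · intro p hp
    simp only [Finset.mem_product, Finset.mem_filter, Finset.mem_powerset] at hp
    have hdisj : Disjoint p.1 p.2 := by
      refine Finset.disjoint_left.mpr fun a ha ha' => ?_
      exact (Finset.mem_sdiff.mp (hp.2.1 ha')).2 (hp.1.1 ha)
    have h1 : (p.1 ∪ p.2) ∩ A = p.1 := by
      apply Finset.Subset.antisymm
      · intro a ha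
        rcases Finset.mem_union.mp (Finset.mem_inter.mp ha).1 with h | h
        · exact h
        · exact absurd (Finset.mem_inter.mp ha).2 (Finset.mem_sdiff.mp (hp.2.1 h)).2
      · intro a ha; exact Finset.mem_inter.mpr ⟨Finset.mem_union_left _ ha, hp.1.1 ha⟩
    have h2 : (p.1 ∪ p.2) \ A = p.2 := by
      apply Finset.Subset.antisymm
      · intro a ha
        rcases Finset.mem_union.mp (Finset.mem_sdiff.mp ha).1 with h | h
        · exact absurd (hp.1.1 h) (Finset.mem_sdiff.mp ha).2
        · exact h
      · intro a ha
        exact Finset.mem_sdiff.mpr ⟨Finset.mem_union_right _ ha,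
          (Finset.mem_sdiff.mp (hp.2.1 ha)).2⟩
    ext <;> simp [h1, h2]
  · intro s hs
    simp only [Finset.mem_filter, Finset.mem_powerset] at hs
    have hdisj : Disjoint (s ∩ A) (s \ A) := by
      refine Finset.disjoint_left.mpr fun a ha ha' => ?_
      exact (Finset.mem_sdiff.mp ha').2 (Finset.mem_inter.mp ha).2
    rw [← pow_add, ← Finset.card_union_of_disjoint hdisj, Finset.union_comm, Finset.sdiff_union_inter]

section
variable {n : ℕ}

open Fin.NatCast in
lemma fin_cast_ne [NeZero n] (hn : 4 ≤ n) (v : Fin n) {a b : ℕ} (ha : a < n) (hb : b < n) (hab : a ≠ b) :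
    v + (a : Fin n) ≠ v + (b : Fin n) := by
  intro h
  have h2 : (a : Fin n) = (b : Fin n) := by
    exact add_left_cancel h
  have h3 := congrArg Fin.val h2
  rw [Fin.val_cast_of_lt ha, Fin.val_cast_of_lt hb] at h3
  exact hab h3

lemma fin_ne1 [NeZero n] (hn : 4 ≤ n) (v : Fin n) : v + 1 ≠ v := by
  have := fin_cast_ne hn v (a := 1) (b := 0) (by omega) (by omega) (by omega)
  simpa using this

open Fin.NatCast in
lemma fin_ne2 [NeZero n] (hn : 4 ≤ n) (v : Fin n) : v + 1 + 1 ≠ v := by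
  have := fin_cast_ne hn v (a := 2) (b := 0) (by omega) (by omega) (by omega)
  have h2 : ((2 : ℕ) : Fin n) = 1 + 1 := by push_cast; exact one_add_one_eq_two.symm
  rw [h2] at this
  simpa [add_assoc] using this

lemma cyc_adj [NeZero n] (hn : 4 ≤ n) (u v : Fin n) :
    (SimpleGraph.cycleGraph n).Adj u v ↔ u = v + 1 ∨ v = u + 1 := by
  rw [SimpleGraph.cycleGraph_adj']
  have h1 : ((1 : Fin n) : ℕ) = 1 := by
    rw [Fin.val_one']; exact Nat.mod_eq_of_lt (by omega)
  have key : ∀ a b : Fin n, (a - b).val = 1 ↔ a = b + 1 := by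
    intro a b
    constructor
    · intro h
      have : a - b = 1 := Fin.ext (by rw [h1]; exact h)
      rw [sub_eq_iff_eq_add] at this
      rw [this, add_comm]
    · intro h
      subst h
      have : b + 1 - b = 1 := by exact add_sub_cancel_left b 1
      rw [this, h1]
  rw [key, key]

lemma ip_struct (n : ℕ) [NeZero n] (hn : 4 ≤ n) (x : ℤ) (K : Finset (Fin n))
    (hK : ∀ v ∈ K, v + 1 ∈ K → (v + 1 + 1 ∉ K ∧ ∀ u ∈ K, u + 1 ≠ v)) :
    2 * (K.filter (fun v => v + 1 ∈ K)).card ≤ K.card ∧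
    ip (SimpleGraph.cycleGraph n) K x =
      (1 + x) ^ (K.card - 2 * (K.filter (fun v => v + 1 ∈ K)).card) *
        (1 + 2 * x) ^ (K.filter (fun v => v + 1 ∈ K)).card := by
  induction K using Finset.strongInduction with
  | _ K IH =>
  rcases Finset.eq_empty_or_nonempty K with rfl | ⟨v, hv⟩
  · simp [ip_empty]
  by_cases hedge : ∃ w ∈ K, w + 1 ∈ K
  · obtain ⟨w, hw, hw1⟩ := hedge
    obtain ⟨hw2, hwprev⟩ := hK w hw hw1
    have hwne : w ≠ w + 1 := fun h => fin_ne1 hn w h.symm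
    have hAsub : ({w, w + 1} : Finset (Fin n)) ⊆ K := by
      intro a ha
      rcases Finset.mem_insert.mp ha with rfl | ha
      · exact hw
      · rw [Finset.mem_singleton] at ha; subst ha; exact hw1
    have hcross : ∀ a ∈ ({w, w + 1} : Finset (Fin n)), ∀ b ∈ K \ {w, w + 1},
        ¬ (SimpleGraph.cycleGraph n).Adj a b := by
      intro a ha b hb hadj
      rw [Finset.mem_sdiff, Finset.mem_insert, Finset.mem_singleton] at hb
      push_neg at hb
      obtain ⟨hbK, hbw, hbw1⟩ := hb
      rw [cyc_adj hn] at hadj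
      rcases Finset.mem_insert.mp ha with rfl | ha
      · rcases hadj with h | h
        · exact hwprev b hbK h.symm
        · exact hbw1 h
      · rw [Finset.mem_singleton] at ha; subst ha
        rcases hadj with h | h
        · exact hbw (add_right_cancel h).symm
        · exact hw2 (h ▸ hbK)
    have hsplit := ip_split (SimpleGraph.cycleGraph n) K {w, w + 1} x hAsub hcross
    set K' := K \ {w, w + 1} with hK'def
    have hss : K' ⊂ K := by
      refine Finset.sdiff_ssubset hAsub ⟨w, Finset.mem_insert_self _ _⟩
    have hK'hyp : ∀ v ∈ K', v + 1 ∈ K' → (v + 1 + 1 ∉ K' ∧ ∀ u ∈ K', u + 1 ≠ v) := by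
      intro a ha ha1
      have haK := (Finset.mem_sdiff.mp ha).1
      have ha1K := (Finset.mem_sdiff.mp ha1).1
      obtain ⟨h2, h3⟩ := hK a haK ha1K
      exact ⟨fun hc => h2 (Finset.mem_sdiff.mp hc).1,
        fun u hu => h3 u (Finset.mem_sdiff.mp hu).1⟩
    obtain ⟨hle', hip'⟩ := IH K' hss hK'hyp
    have hfilter : K'.filter (fun v => v + 1 ∈ K') = (K.filter (fun v => v + 1 ∈ K)).erase w := by
      ext u
      simp only [Finset.mem_filter, Finset.mem_erase, hK'def, Finset.mem_sdiff,
        Finset.mem_insert, Finset.mem_singleton]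
      constructor
      · rintro ⟨⟨huK, hne⟩, hu1K, hne1⟩
        push_neg at hne
        exact ⟨hne.1, huK, hu1K⟩
      · rintro ⟨hnew, huK, hu1K⟩
        have hnew1 : u ≠ w + 1 := by
          rintro rfl
          exact hw2 hu1K
        refine ⟨⟨huK, ?_⟩, hu1K, ?_⟩
        · push_neg; exact ⟨hnew, hnew1⟩
        · push_neg
          constructor
          · exact hwprev u huK
          · intro hc
            exact hnew (add_right_cancel hc)
    have hwfil : w ∈ K.filter (fun v => v + 1 ∈ K) := Finset.mem_filter.mpr ⟨hw, hw1⟩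
    set b := (K.filter (fun v => v + 1 ∈ K)).card with hbdef
    have hb1 : 1 ≤ b := Finset.card_pos.mpr ⟨w, hwfil⟩
    have hbcard : (K'.filter (fun v => v + 1 ∈ K')).card = b - 1 := by
      rw [hfilter, Finset.card_erase_of_mem hwfil]
    have hA2 : ({w, w + 1} : Finset (Fin n)).card = 2 := by
      rw [Finset.card_insert_of_notMem (by simpa using hwne), Finset.card_singleton]
    have hK2 : 2 ≤ K.card := by
      calc 2 = ({w, w + 1} : Finset (Fin n)).card := hA2.symm
      _ ≤ K.card := Finset.card_le_card hAsub
    have hcard' : K'.card = K.card - 2 := by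
      rw [hK'def, Finset.card_sdiff_of_subset hAsub, hA2]
    rw [hbcard, hcard'] at hle' hip'
    constructor
    · omega
    · rw [hsplit, ip_pair _ _ _ hwne ((cyc_adj hn _ _).mpr (Or.inr rfl)) x, hip']
      have he : K.card - 2 - 2 * (b - 1) = K.card - 2 * b := by omega
      have hb2 : b = (b - 1) + 1 := by omega
      have hpow : (1 + 2 * x) ^ b = (1 + 2 * x) ^ (b - 1) * (1 + 2 * x) := by
        conv_lhs => rw [hb2]
        rw [pow_succ]
      rw [he, hpow]
      ring
  · push_neg at hedge
    have hfil : K.filter (fun v => v + 1 ∈ K) = ∅ := by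
      rw [Finset.filter_eq_empty_iff]
      exact hedge
    have hcross : ∀ a ∈ ({v} : Finset (Fin n)), ∀ b ∈ K \ {v},
        ¬ (SimpleGraph.cycleGraph n).Adj a b := by
      intro a ha b hb hadj
      rw [Finset.mem_singleton] at ha
      rw [Finset.mem_sdiff, Finset.mem_singleton] at hb
      rw [ha, cyc_adj hn] at hadj
      rcases hadj with h | h
      · exact hedge b hb.1 (h ▸ hv)
      · exact hedge v hv (h ▸ hb.1)
    have hAsub : ({v} : Finset (Fin n)) ⊆ K := by simpa using hv
    have hsplit := ip_split (SimpleGraph.cycleGraph n) K {v} x hAsub hcross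
    set K' := K \ {v} with hK'def
    have hss : K' ⊂ K := Finset.sdiff_ssubset hAsub ⟨v, Finset.mem_singleton_self v⟩
    have hK'hyp : ∀ a ∈ K', a + 1 ∈ K' → (a + 1 + 1 ∉ K' ∧ ∀ u ∈ K', u + 1 ≠ a) := by
      intro a ha ha1
      exact absurd ((Finset.mem_sdiff.mp ha1).1) (hedge a (Finset.mem_sdiff.mp ha).1)
    obtain ⟨hle', hip'⟩ := IH K' hss hK'hyp
    have hfil' : K'.filter (fun u => u + 1 ∈ K') = ∅ := by
      rw [Finset.filter_eq_empty_iff]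
      intro u hu hc
      exact hedge u (Finset.mem_sdiff.mp hu).1 (Finset.mem_sdiff.mp hc).1
    rw [hfil', Finset.card_empty] at hip'
    have hcard' : K'.card = K.card - 1 := by
      rw [hK'def, Finset.card_sdiff_of_subset hAsub, Finset.card_singleton]
    have hK1 : 1 ≤ K.card := Finset.card_pos.mpr ⟨v, hv⟩
    rw [hfil, Finset.card_empty]
    constructor
    · omega
    · rw [hsplit, ip_singleton, hip', hcard']
      simp only [Nat.mul_zero, Nat.sub_zero, pow_zero, mul_one]
      rw [← pow_succ']
      congr 1
      omega
end


section
variable {V : Type*} {G : SimpleGraph V} {C : Set V}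
lemma susp_adj_some {a b : V} : (susp G C).Adj (some a) (some b) ↔ G.Adj a b := Iff.rfl
lemma susp_adj_none_some {b : V} : (susp G C).Adj none (some b) ↔ b ∈ C := Iff.rfl
lemma susp_adj_some_none {a : V} : (susp G C).Adj (some a) none ↔ a ∈ C := Iff.rfl
end

/-- For `n ≥ 4`, a maximal independent set `𝒞` of `C_n` with `c = |𝒞|`,
`ℓ = n - 2c`, and `G` the `𝒞`-suspension of `C_n`:
`P_G(x) = P_{C_n}(x) + x(1+x)^{c-ℓ}(1+2x)^ℓ`. -/
theorem stmt16 (n : ℕ) (hn : 4 ≤ n) (C : Finset (Fin n))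
    (hind : ∀ a ∈ C, ∀ b ∈ C, ¬ (SimpleGraph.cycleGraph n).Adj a b)
    (hmax : ∀ v ∉ C, ∃ u ∈ C, (SimpleGraph.cycleGraph n).Adj v u) :
    ∀ x : ℤ, indepPolynomial (susp (SimpleGraph.cycleGraph n) (↑C : Set (Fin n))) x =
      indepPolynomial (SimpleGraph.cycleGraph n) x +
        x * (1 + x) ^ (C.card - (n - 2 * C.card)) * (1 + 2 * x) ^ (n - 2 * C.card) := by
  intro x
  haveI : NeZero n := ⟨by omega⟩
  set G := SimpleGraph.cycleGraph n with hG
  set K : Finset (Fin n) := Finset.univ \ C with hKdef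
  have hCK : ∀ v : Fin n, v ∈ K ↔ v ∉ C := by intro v; simp [hKdef]
  have hadjsucc : ∀ v : Fin n, G.Adj v (v + 1) := fun v => (cyc_adj hn _ _).mpr (Or.inr rfl)
  have hnotboth : ∀ v : Fin n, v ∈ C → v + 1 ∉ C := fun v hv hv1 =>
    hind v hv (v + 1) hv1 (hadjsucc v)
  -- counting
  have hcount2 : (Finset.univ.filter (fun v : Fin n => v + 1 ∈ C)).card = C.card := by
    apply Finset.card_nbij' (fun v => v + 1) (fun u => u - 1)
    · intro a ha; exact (Finset.mem_filter.mp ha).2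
    · intro u hu; simp only [Finset.mem_filter, Finset.mem_univ, true_and, sub_add_cancel]
      simpa using hu
    · intro a _; simp
    · intro u _; simp
  have hcount1 : (Finset.univ.filter (fun v : Fin n => v ∈ C)).card = C.card := by
    congr 1
    ext v; simp
  have hKcard : K.card = n - C.card := by
    rw [hKdef, Finset.card_sdiff_of_subset (Finset.subset_univ C), Finset.card_univ, Fintype.card_fin]
  have hCn : C.card ≤ n := by
    calc C.card ≤ Finset.univ.card := Finset.card_le_card (Finset.subset_univ C)
    _ = n := by rw [Finset.card_univ, Fintype.card_fin]
  -- partition of univ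
  have hpart1 : (Finset.univ.filter (fun v : Fin n => v ∈ C)).card
      + (Finset.univ.filter (fun v : Fin n => v ∉ C)).card = n := by
    rw [Finset.card_filter_add_card_filter_not, Finset.card_univ, Fintype.card_fin]
  have hpart2 : ((Finset.univ.filter (fun v : Fin n => v ∉ C)).filter
        (fun v : Fin n => v + 1 ∈ C)).card
      + ((Finset.univ.filter (fun v : Fin n => v ∉ C)).filter
        (fun v : Fin n => ¬ (v + 1 ∈ C))).card
      = (Finset.univ.filter (fun v : Fin n => v ∉ C)).card :=
    Finset.card_filter_add_card_filter_not (fun v => v + 1 ∈ C)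
  have heq2 : (Finset.univ.filter (fun v : Fin n => v ∉ C)).filter (fun v : Fin n => v + 1 ∈ C)
      = Finset.univ.filter (fun v : Fin n => v + 1 ∈ C) := by
    ext v
    simp only [Finset.mem_filter, Finset.mem_univ, true_and]
    constructor
    · rintro ⟨_, h⟩; exact h
    · intro h
      exact ⟨fun hv => hnotboth v hv h, h⟩
  have hEfil : K.filter (fun v => v + 1 ∈ K)
      = (Finset.univ.filter (fun v : Fin n => v ∉ C)).filter (fun v : Fin n => ¬ (v + 1 ∈ C)) := by
    ext v
    constructor
    · intro h
      rw [Finset.mem_filter, hKdef, Finset.mem_sdiff] at h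
      rw [Finset.mem_filter, Finset.mem_filter]
      have h2 := h.2
      rw [Finset.mem_sdiff] at h2
      exact ⟨⟨Finset.mem_univ v, h.1.2⟩, h2.2⟩
    · intro h
      rw [Finset.mem_filter, Finset.mem_filter] at h
      rw [Finset.mem_filter, hKdef, Finset.mem_sdiff, Finset.mem_sdiff]
      exact ⟨⟨Finset.mem_univ v, h.1.2⟩, Finset.mem_univ _, h.2⟩
  set E := K.filter (fun v => v + 1 ∈ K) with hEdef
  have hb2 : ((Finset.univ.filter (fun v : Fin n => v ∉ C)).filter
      (fun v : Fin n => v + 1 ∈ C)).card = C.card := by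
    rw [heq2]; exact hcount2
  have hEcard : 2 * C.card + E.card = n := by
    rw [hEfil]
    omega
  -- hypothesis for ip_struct
  have hKhyp : ∀ v ∈ K, v + 1 ∈ K → (v + 1 + 1 ∉ K ∧ ∀ u ∈ K, u + 1 ≠ v) := by
    intro v hvK hv1K
    have hvC : v ∉ C := (hCK v).mp hvK
    have hv1C : v + 1 ∉ C := (hCK (v + 1)).mp hv1K
    constructor
    · obtain ⟨u, huC, hadj⟩ := hmax (v + 1) hv1C
      rw [cyc_adj hn] at hadj
      intro hK2
      rcases hadj with h | h
      · exact hvC (by rw [add_right_cancel h]; exact huC)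
      · exact (hCK _).mp hK2 (h ▸ huC)
    · intro u huK hu1
      obtain ⟨w, hwC, hadj⟩ := hmax v hvC
      rw [cyc_adj hn] at hadj
      rcases hadj with h | h
      · have huw : u = w := add_right_cancel (hu1.trans h)
        exact (hCK u).mp huK (by rw [huw]; exact hwC)
      · exact hv1C (h ▸ hwC)
  obtain ⟨hle, hip⟩ := ip_struct n hn x K hKhyp
  rw [← hEdef] at hle hip
  -- top-level split
  have hPG : indepPolynomial G x = ip G Finset.univ x := by
    rw [indepPolynomial, ip, Finset.powerset_univ]
  have hsplitsum := Finset.sum_filter_add_sum_filter_not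
    (Finset.univ.filter (fun s : Finset (Option (Fin n)) => IsIndepFinset (susp G (↑C)) s))
    (fun s => none ∈ s) (fun s => x ^ s.card)
  have h1 : ∑ s ∈ (Finset.univ.filter
        (fun s : Finset (Option (Fin n)) => IsIndepFinset (susp G (↑C)) s)).filter
        (fun s => ¬ none ∈ s), x ^ s.card = indepPolynomial G x := by
    rw [indepPolynomial]
    refine Finset.sum_nbij' (fun s => s.eraseNone) (fun t => t.image some) ?_ ?_ ?_ ?_ ?_
    · intro s hs
      simp only [Finset.mem_filter, Finset.mem_univ, true_and] at hs ⊢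
      intro a ha b hb
      rw [Finset.mem_eraseNone] at ha hb
      intro hadj
      exact hs.1 (some a) ha (some b) hb (susp_adj_some.mpr hadj)
    · intro t ht
      simp only [Finset.mem_filter, Finset.mem_univ, true_and] at ht ⊢
      constructor
      · rintro (_ | a) ha (_ | b) hb
        · exact fun h => h
        · simp at ha
        · simp at hb
        · simp only [Finset.mem_image] at ha hb
          obtain ⟨a', ha', ha2⟩ := ha
          obtain ⟨b', hb', hb2⟩ := hb
          obtain rfl : a' = a := Option.some_injective _ ha2
          obtain rfl : b' = b := Option.some_injective _ hb2
          exact fun h => ht a' ha' b' hb' (susp_adj_some.mp h)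
      · simp
    · intro s hs
      simp only [Finset.mem_filter] at hs
      show s.eraseNone.image some = s
      rw [Finset.image_some_eraseNone, Finset.erase_eq_of_notMem hs.2]
    · intro t _
      exact Finset.eraseNone_image_some t
    · intro s hs
      simp only [Finset.mem_filter] at hs
      congr 1
      conv_lhs => rw [← Finset.erase_eq_of_notMem hs.2, ← Finset.image_some_eraseNone]
      rw [Finset.card_image_of_injective _ (Option.some_injective _)]
  have h2 : ∑ s ∈ (Finset.univ.filter
        (fun s : Finset (Option (Fin n)) => IsIndepFinset (susp G (↑C)) s)).filter
        (fun s => none ∈ s), x ^ s.card = x * ip G K x := by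
    rw [ip, Finset.mul_sum]
    refine Finset.sum_nbij' (fun s => s.eraseNone) (fun t => Finset.insertNone t) ?_ ?_ ?_ ?_ ?_
    · intro s hs
      simp only [Finset.mem_filter, Finset.mem_univ, true_and] at hs
      simp only [Finset.mem_filter, Finset.mem_powerset]
      constructor
      · intro a ha
        rw [Finset.mem_eraseNone] at ha
        rw [hCK]
        intro haC
        exact hs.1 none hs.2 (some a) ha (susp_adj_none_some.mpr haC)
      · intro a ha b hb
        rw [Finset.mem_eraseNone] at ha hb
        exact fun hadj => hs.1 (some a) ha (some b) hb (susp_adj_some.mpr hadj)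
    · intro t ht
      simp only [Finset.mem_filter, Finset.mem_powerset] at ht
      simp only [Finset.mem_filter, Finset.mem_univ, true_and]
      refine ⟨?_, Finset.none_mem_insertNone⟩
      rintro (_ | a) ha (_ | b) hb
      · exact fun h => h
      · rw [Finset.mem_insertNone] at hb
        have hb' : b ∈ t := hb b rfl
        intro hadj
        exact (hCK b).mp (ht.1 hb') (susp_adj_none_some.mp hadj)
      · rw [Finset.mem_insertNone] at ha
        have ha' : a ∈ t := ha a rfl
        intro hadj
        exact (hCK a).mp (ht.1 ha') (susp_adj_some_none.mp hadj)
      · rw [Finset.mem_insertNone] at ha hb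
        have ha' : a ∈ t := ha a rfl
        have hb' : b ∈ t := hb b rfl
        exact fun hadj => ht.2 a ha' b hb' (susp_adj_some.mp hadj)
    · intro s hs
      simp only [Finset.mem_filter] at hs
      show Finset.insertNone s.eraseNone = s
      rw [Finset.insertNone_eraseNone, Finset.insert_eq_self.mpr hs.2]
    · intro t _
      exact Finset.eraseNone_insertNone t
    · intro s hs
      simp only [Finset.mem_filter] at hs
      have hc : s.card = s.eraseNone.card + 1 := by
        conv_lhs => rw [← Finset.insert_eq_self.mpr hs.2, ← Finset.insertNone_eraseNone]
        rw [Finset.card_insertNone]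
      rw [hc, pow_succ]
      ring
  rw [indepPolynomial, ← hsplitsum, h1, h2, hip]
  have he1 : K.card - 2 * E.card = C.card - (n - 2 * C.card) := by omega
  have he2 : E.card = n - 2 * C.card := by omega
  rw [he1, he2]
  ring
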